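/- (Proposition 3.2, second-order difference estimate, case k = 0.) There exists a constant c > 0 such that the following holds. Let A be a unital C*-algebra over ℂ and let μ be a finite complex Borel measure on ℝ with ‖f‖_2 := Σ_{i=0}^{2} ∫_ℝ |ξ|^i d|μ|(ξ) < ∞. Then for all self-adjoint X_1, X_2, Y_1, Y_2 ∈ A, ‖f_μ(X_1) − f_μ(X_2) − f_μ(Y_1) + f_μ(Y_2)‖ ≤ c · ‖f‖_2 · ( ‖X_1 − X_2‖·‖X_1 − Y_1‖ + ‖X_1 − X_2‖·‖X_2 − Y_2‖ + ‖X_1 − X_2 − Y_1 + Y_2‖ ). -/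

import Mathlib

open MeasureTheory

/-- `exp(i t X)` in a complex Banach algebra, for `t : ℝ`. -/
noncomputable def uexp {A : Type*} [NormedRing A] [NormedAlgebra ℂ A]
    (t : ℝ) (X : A) : A :=
  NormedSpace.exp ((Complex.I * (t : ℂ)) • X)

/-- `f_μ(X) := ∫_ℝ exp(iξX) dμ(ξ)` (Bochner integral in `A`), for a finite complex
Borel measure `μ` on `ℝ` represented by its total variation `ν = |μ|` together with a
unimodular density `ρ` (so that `dμ = ρ dν`). -/
noncomputable def fmu {A : Type*} [NormedRing A] [NormedAlgebra ℂ A] [CompleteSpace A]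
    (ν : Measure ℝ) (ρ : ℝ → ℂ) (X : A) : A :=
  ∫ ξ, ρ ξ • uexp ξ X ∂ν

/-- The first-derivative formula
`df_μ(X)(Y) = ∫₀¹ ∫_ℝ iξ exp(iαξX) Y exp(i(1−α)ξX) dμ(ξ) dα`. -/
noncomputable def dfmu {A : Type*} [NormedRing A] [NormedAlgebra ℂ A] [CompleteSpace A]
    (ν : Measure ℝ) (ρ : ℝ → ℂ) (X Y : A) : A :=
  ∫ α in (0 : ℝ)..1,
    ∫ ξ, (ρ ξ * (ξ : ℂ) * Complex.I) •
      (uexp (α * ξ) X * Y * uexp ((1 - α) * ξ) X) ∂ν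

namespace FmuAux

open NormedSpace

variable {A : Type*} [CStarAlgebra A]

lemma uexp_smul_eq (X : A) (s t : ℝ) :
    uexp (s * t) X = exp (s • ((Complex.I * (t : ℂ)) • X)) := by
  rw [uexp]
  congr 1
  rw [← Complex.coe_smul, smul_smul]
  congr 1
  push_cast
  ring

lemma uexp_zero (X : A) : uexp 0 X = 1 := by
  simp [uexp, NormedSpace.exp_zero]

lemma hasDerivAt_uexp_mul (X : A) (t s : ℝ) :
    HasDerivAt (fun s : ℝ => uexp (s * t) X)
      (uexp (s * t) X * ((Complex.I * (t : ℂ)) • X)) s := by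
  have h := hasDerivAt_exp_smul_const (𝕂 := ℝ) ((Complex.I * (t : ℂ)) • X) s
  simpa only [← uexp_smul_eq] using h

lemma hasDerivAt_uexp_one_sub (X : A) (t s : ℝ) :
    HasDerivAt (fun s : ℝ => uexp ((1 - s) * t) X)
      (-(((Complex.I * (t : ℂ)) • X) * uexp ((1 - s) * t) X)) s := by
  have h := hasDerivAt_exp_smul_const' (𝕂 := ℝ) ((Complex.I * (t : ℂ)) • X) (1 - s)
  have h2 : HasDerivAt (fun s : ℝ => 1 - s) (-1 : ℝ) s := by
    simpa using (hasDerivAt_id s).const_sub 1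
  have h3 := HasDerivAt.scomp (𝕜 := ℝ) s h h2
  simp only [Function.comp_def, ← uexp_smul_eq, neg_one_smul] at h3
  exact h3

lemma uexp_mem_unitary {X : A} (hX : IsSelfAdjoint X) (t : ℝ) :
    uexp t X ∈ unitary A := by
  have h1 : uexp t X = exp (Complex.I • ((t : ℝ) • X)) := by
    rw [uexp, mul_smul, Complex.coe_smul]
  rw [h1]
  letI : NormedAlgebra ℚ A := .restrictScalars ℚ ℂ A
  exact exp_mem_unitary_of_mem_skewAdjoint
    (((IsSelfAdjoint.all t).smul hX).smul_mem_skewAdjoint Complex.conj_I)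

lemma norm_uexp_le {X : A} (hX : IsSelfAdjoint X) (t : ℝ) : ‖uexp t X‖ ≤ 1 := by
  rcases subsingleton_or_nontrivial A with h | h
  · rw [Subsingleton.elim (uexp t X) 0, norm_zero]; exact zero_le_one
  · exact le_of_eq (CStarRing.norm_of_mem_unitary (uexp_mem_unitary hX t))

lemma norm_It_smul (Z : A) (t : ℝ) : ‖(Complex.I * (t : ℂ)) • Z‖ = |t| * ‖Z‖ := by
  rw [norm_smul, norm_mul, Complex.norm_I, one_mul, Complex.norm_real, Real.norm_eq_abs]

lemma duhamel {X Y : A} (hX : IsSelfAdjoint X) (hY : IsSelfAdjoint Y) (t : ℝ) :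
    ‖uexp t X - uexp t Y‖ ≤ |t| * ‖X - Y‖ := by
  have hderiv : ∀ s : ℝ, HasDerivAt (fun s : ℝ => uexp (s * t) X * uexp ((1 - s) * t) Y)
      (uexp (s * t) X * ((Complex.I * (t : ℂ)) • (X - Y)) * uexp ((1 - s) * t) Y) s := by
    intro s
    have h1 := (hasDerivAt_uexp_mul X t s).mul (hasDerivAt_uexp_one_sub Y t s)
    refine h1.congr_deriv ?_
    rw [smul_sub]
    noncomm_ring
  have hbound : ∀ s ∈ Set.Ico (0:ℝ) 1,
      ‖uexp (s * t) X * ((Complex.I * (t : ℂ)) • (X - Y)) * uexp ((1 - s) * t) Y‖ ≤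
        |t| * ‖X - Y‖ := by
    intro s _
    calc ‖uexp (s * t) X * ((Complex.I * (t : ℂ)) • (X - Y)) * uexp ((1 - s) * t) Y‖
        ≤ ‖uexp (s * t) X * ((Complex.I * (t : ℂ)) • (X - Y))‖ * ‖uexp ((1 - s) * t) Y‖ :=
          norm_mul_le _ _
      _ ≤ ‖uexp (s * t) X‖ * ‖(Complex.I * (t : ℂ)) • (X - Y)‖ * ‖uexp ((1 - s) * t) Y‖ := by
          gcongr; exact norm_mul_le _ _
      _ ≤ 1 * (|t| * ‖X - Y‖) * 1 := by
          rw [norm_It_smul]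
          gcongr <;> first
            | exact norm_uexp_le hX _
            | exact norm_uexp_le hY _
            | positivity
      _ = |t| * ‖X - Y‖ := by ring
  have h := norm_image_sub_le_of_norm_deriv_le_segment_01'
    (fun s _ => (hderiv s).hasDerivWithinAt) hbound
  simpa [uexp_zero] using h

lemma second_order {X₁ X₂ Y₁ Y₂ : A} (h1 : IsSelfAdjoint X₁) (h2 : IsSelfAdjoint X₂)
    (h3 : IsSelfAdjoint Y₁) (h4 : IsSelfAdjoint Y₂) (t : ℝ) :
    ‖uexp t X₁ - uexp t X₂ - uexp t Y₁ + uexp t Y₂‖ ≤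
      t ^ 2 * (‖X₁ - X₂‖ * ‖X₁ - Y₁‖ + ‖X₁ - X₂‖ * ‖X₂ - Y₂‖) +
        |t| * ‖X₁ - X₂ - Y₁ + Y₂‖ := by
  set E : A := (Complex.I * (t : ℂ)) • (X₁ - X₂) with hE
  set F : A := (Complex.I * (t : ℂ)) • (Y₁ - Y₂) with hF
  set G : A := (Complex.I * (t : ℂ)) • (X₁ - X₂ - Y₁ + Y₂) with hG
  have hEFG : F = E - G := by rw [hE, hF, hG, ← smul_sub]; congr 1; abel
  have hderiv : ∀ s : ℝ, HasDerivAt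
      (fun s : ℝ => uexp (s * t) X₁ * uexp ((1 - s) * t) X₂ -
        uexp (s * t) Y₁ * uexp ((1 - s) * t) Y₂)
      (uexp (s * t) X₁ * E * uexp ((1 - s) * t) X₂ -
        uexp (s * t) Y₁ * F * uexp ((1 - s) * t) Y₂) s := by
    intro s
    have hA := (hasDerivAt_uexp_mul X₁ t s).mul (hasDerivAt_uexp_one_sub X₂ t s)
    have hB := (hasDerivAt_uexp_mul Y₁ t s).mul (hasDerivAt_uexp_one_sub Y₂ t s)
    refine (hA.sub hB).congr_deriv ?_
    rw [hE, hF, smul_sub, smul_sub]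
    noncomm_ring
  have hbound : ∀ s ∈ Set.Ico (0:ℝ) 1,
      ‖uexp (s * t) X₁ * E * uexp ((1 - s) * t) X₂ -
        uexp (s * t) Y₁ * F * uexp ((1 - s) * t) Y₂‖ ≤
      t ^ 2 * (‖X₁ - X₂‖ * ‖X₁ - Y₁‖ + ‖X₁ - X₂‖ * ‖X₂ - Y₂‖) +
        |t| * ‖X₁ - X₂ - Y₁ + Y₂‖ := by
    intro s hs
    set P₁ := uexp (s * t) X₁
    set P₂ := uexp ((1 - s) * t) X₂
    set Q₁ := uexp (s * t) Y₁
    set Q₂ := uexp ((1 - s) * t) Y₂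
    have hdecomp : P₁ * E * P₂ - Q₁ * F * Q₂ =
        (P₁ - Q₁) * E * P₂ + Q₁ * E * (P₂ - Q₂) + Q₁ * G * Q₂ := by
      rw [hEFG]; noncomm_ring
    rw [hdecomp]
    have hst : |s * t| ≤ |t| := by
      rw [abs_mul]
      calc |s| * |t| ≤ 1 * |t| := by
            gcongr; rw [abs_of_nonneg hs.1]; exact hs.2.le
        _ = |t| := one_mul _
    have hst' : |(1 - s) * t| ≤ |t| := by
      rw [abs_mul]
      calc |1 - s| * |t| ≤ 1 * |t| := by
            gcongr
            rw [abs_of_nonneg (by linarith [hs.2.le])]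
            linarith [hs.1]
        _ = |t| := one_mul _
    have hT1 : ‖(P₁ - Q₁) * E * P₂‖ ≤ |t| * ‖X₁ - Y₁‖ * (|t| * ‖X₁ - X₂‖) := by
      calc ‖(P₁ - Q₁) * E * P₂‖ ≤ ‖P₁ - Q₁‖ * ‖E‖ * ‖P₂‖ :=
            le_trans (norm_mul_le _ _) (by gcongr; exact norm_mul_le _ _)
        _ ≤ (|t| * ‖X₁ - Y₁‖) * (|t| * ‖X₁ - X₂‖) * 1 := by
            rw [hE, norm_It_smul]
            gcongr <;> first
              | exact (duhamel h1 h3 (s * t)).trans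
                  (mul_le_mul_of_nonneg_right hst (norm_nonneg _))
              | exact norm_uexp_le h2 _
              | positivity
        _ = |t| * ‖X₁ - Y₁‖ * (|t| * ‖X₁ - X₂‖) := by ring
    have hT2 : ‖Q₁ * E * (P₂ - Q₂)‖ ≤ |t| * ‖X₁ - X₂‖ * (|t| * ‖X₂ - Y₂‖) := by
      calc ‖Q₁ * E * (P₂ - Q₂)‖ ≤ ‖Q₁‖ * ‖E‖ * ‖P₂ - Q₂‖ :=
            le_trans (norm_mul_le _ _) (by gcongr; exact norm_mul_le _ _)
        _ ≤ 1 * (|t| * ‖X₁ - X₂‖) * (|t| * ‖X₂ - Y₂‖) := by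
            rw [hE, norm_It_smul]
            gcongr <;> first
              | exact (duhamel h2 h4 ((1 - s) * t)).trans
                  (mul_le_mul_of_nonneg_right hst' (norm_nonneg _))
              | exact norm_uexp_le h3 _
              | positivity
        _ = |t| * ‖X₁ - X₂‖ * (|t| * ‖X₂ - Y₂‖) := by ring
    have hT3 : ‖Q₁ * G * Q₂‖ ≤ |t| * ‖X₁ - X₂ - Y₁ + Y₂‖ := by
      calc ‖Q₁ * G * Q₂‖ ≤ ‖Q₁‖ * ‖G‖ * ‖Q₂‖ :=
            le_trans (norm_mul_le _ _) (by gcongr; exact norm_mul_le _ _)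
        _ ≤ 1 * (|t| * ‖X₁ - X₂ - Y₁ + Y₂‖) * 1 := by
            rw [hG, norm_It_smul]
            gcongr <;> first
              | exact norm_uexp_le h3 _
              | exact norm_uexp_le h4 _
              | positivity
        _ = |t| * ‖X₁ - X₂ - Y₁ + Y₂‖ := by ring
    calc ‖(P₁ - Q₁) * E * P₂ + Q₁ * E * (P₂ - Q₂) + Q₁ * G * Q₂‖
        ≤ ‖(P₁ - Q₁) * E * P₂‖ + ‖Q₁ * E * (P₂ - Q₂)‖ + ‖Q₁ * G * Q₂‖ :=
          le_trans (norm_add_le _ _) (by gcongr; exact norm_add_le _ _)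
      _ ≤ |t| * ‖X₁ - Y₁‖ * (|t| * ‖X₁ - X₂‖) + |t| * ‖X₁ - X₂‖ * (|t| * ‖X₂ - Y₂‖) +
          |t| * ‖X₁ - X₂ - Y₁ + Y₂‖ := by gcongr
      _ = t ^ 2 * (‖X₁ - X₂‖ * ‖X₁ - Y₁‖ + ‖X₁ - X₂‖ * ‖X₂ - Y₂‖) +
          |t| * ‖X₁ - X₂ - Y₁ + Y₂‖ := by rw [← sq_abs t]; ring
  have h := norm_image_sub_le_of_norm_deriv_le_segment_01'
    (fun s _ => (hderiv s).hasDerivWithinAt) hbound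
  have heq : uexp t X₁ - uexp t X₂ - uexp t Y₁ + uexp t Y₂ =
      (uexp (1 * t) X₁ * uexp ((1 - 1) * t) X₂ - uexp (1 * t) Y₁ * uexp ((1 - 1) * t) Y₂) -
      (uexp (0 * t) X₁ * uexp ((1 - 0) * t) X₂ - uexp (0 * t) Y₁ * uexp ((1 - 0) * t) Y₂) := by
    norm_num [uexp_zero]
    abel
  rw [heq]
  exact h

end FmuAux

open FmuAux in
/-- Proposition 3.2, second-order difference estimate, case `k = 0`.
There is a universal constant `c > 0` such that, for every unital C*-algebra `A` over
`ℂ` and every finite complex Borel measure `μ` on `ℝ` (given by its total variation `ν`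
and unimodular density `ρ`) with `‖f‖₂ := ∑_{i=0}^{2} ∫ |ξ|^i d|μ|(ξ) < ∞`, and all
self-adjoint `X₁, X₂, Y₁, Y₂ ∈ A`,
`‖f_μ(X₁) − f_μ(X₂) − f_μ(Y₁) + f_μ(Y₂)‖
  ≤ c ‖f‖₂ (‖X₁−X₂‖ ‖X₁−Y₁‖ + ‖X₁−X₂‖ ‖X₂−Y₂‖ + ‖X₁−X₂−Y₁+Y₂‖)`. -/
theorem fmu_second_order_difference :
    ∃ c : ℝ, 0 < c ∧
      ∀ (A : Type*) [CStarAlgebra A],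
        ∀ (ν : Measure ℝ) [IsFiniteMeasure ν],
          ∀ (ρ : ℝ → ℂ), Measurable ρ → (∀ ξ, ‖ρ ξ‖ = 1) →
            Integrable (fun ξ : ℝ => ξ) ν → Integrable (fun ξ : ℝ => ξ ^ 2) ν →
              ∀ X₁ X₂ Y₁ Y₂ : A, IsSelfAdjoint X₁ → IsSelfAdjoint X₂ →
                IsSelfAdjoint Y₁ → IsSelfAdjoint Y₂ →
                ‖fmu ν ρ X₁ - fmu ν ρ X₂ - fmu ν ρ Y₁ + fmu ν ρ Y₂‖ ≤
                  c * ((ν Set.univ).toReal + (∫ ξ, |ξ| ∂ν) + ∫ ξ, ξ ^ 2 ∂ν) *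
                    (‖X₁ - X₂‖ * ‖X₁ - Y₁‖ + ‖X₁ - X₂‖ * ‖X₂ - Y₂‖ +
                      ‖X₁ - X₂ - Y₁ + Y₂‖) := by
  refine ⟨1, one_pos, ?_⟩
  intro A _ ν _ ρ hρm hρ1 hint1 hint2 X₁ X₂ Y₁ Y₂ h1 h2 h3 h4
  set K : ℝ := ‖X₁ - X₂‖ * ‖X₁ - Y₁‖ + ‖X₁ - X₂‖ * ‖X₂ - Y₂‖ + ‖X₁ - X₂ - Y₁ + Y₂‖ with hK
  have hI : ∀ X : A, IsSelfAdjoint X → Integrable (fun ξ => ρ ξ • uexp ξ X) ν := by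
    intro X hX
    letI : NormedAlgebra ℚ A := .restrictScalars ℚ ℂ A
    have hcont : Continuous fun ξ : ℝ => uexp ξ X :=
      NormedSpace.exp_continuous.comp
        ((continuous_const.mul Complex.continuous_ofReal).smul continuous_const)
    refine Integrable.mono' (integrable_const 1)
      (hρm.aestronglyMeasurable.smul hcont.aestronglyMeasurable) ?_
    filter_upwards with ξ
    rw [norm_smul, hρ1, one_mul]
    exact norm_uexp_le hX ξ
  have hI1 := hI X₁ h1
  have hI2 := hI X₂ h2
  have hI3 := hI Y₁ h3
  have hI4 := hI Y₂ h4
  have h12 : Integrable (fun ξ => ρ ξ • uexp ξ X₁ - ρ ξ • uexp ξ X₂) ν := hI1.sub hI2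
  have h123 : Integrable
      (fun ξ => ρ ξ • uexp ξ X₁ - ρ ξ • uexp ξ X₂ - ρ ξ • uexp ξ Y₁) ν := h12.sub hI3
  have key : fmu ν ρ X₁ - fmu ν ρ X₂ - fmu ν ρ Y₁ + fmu ν ρ Y₂
      = ∫ ξ, ρ ξ • (uexp ξ X₁ - uexp ξ X₂ - uexp ξ Y₁ + uexp ξ Y₂) ∂ν := by
    rw [fmu, fmu, fmu, fmu, ← integral_sub hI1 hI2, ← integral_sub h12 hI3,
      ← integral_add h123 hI4]
    simp only [smul_sub, smul_add]
  rw [key]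
  have hIg : Integrable (fun ξ : ℝ => (1 + |ξ| + ξ ^ 2) * K) ν :=
    (((integrable_const 1).add hint1.abs).add hint2).mul_const K
  have hbound : ∀ ξ : ℝ, ‖ρ ξ • (uexp ξ X₁ - uexp ξ X₂ - uexp ξ Y₁ + uexp ξ Y₂)‖ ≤
      (1 + |ξ| + ξ ^ 2) * K := by
    intro ξ
    rw [norm_smul, hρ1, one_mul]
    refine (second_order h1 h2 h3 h4 ξ).trans ?_
    have ha := norm_nonneg (X₁ - X₂)
    have hb1 := norm_nonneg (X₁ - Y₁)
    have hb2 := norm_nonneg (X₂ - Y₂)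
    have hd := norm_nonneg (X₁ - X₂ - Y₁ + Y₂)
    have hξ := abs_nonneg ξ
    have hξ2 := sq_nonneg ξ
    rw [hK]
    nlinarith [mul_nonneg ha hb1, mul_nonneg ha hb2,
      mul_nonneg hξ (mul_nonneg ha hb1), mul_nonneg hξ (mul_nonneg ha hb2),
      mul_nonneg hξ2 hd, mul_nonneg hξ hd]
  have hle := norm_integral_le_of_norm_le hIg (Filter.Eventually.of_forall hbound)
  refine hle.trans ?_
  have h1a : Integrable (fun ξ : ℝ => 1 + |ξ|) ν := (integrable_const 1).add hint1.abs
  have e1 : (∫ ξ, (1 + |ξ| + ξ ^ 2) ∂ν)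
      = (ν Set.univ).toReal + (∫ ξ, |ξ| ∂ν) + ∫ ξ, ξ ^ 2 ∂ν := by
    rw [integral_add h1a hint2, integral_add (integrable_const 1) hint1.abs,
      integral_const, smul_eq_mul, mul_one, measureReal_def]
  rw [MeasureTheory.integral_mul_const, e1, one_mul]
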